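/- Let A be a metric space endowed with a finite Borel measure that is positive on every nonempty open subset. Let φ be a measure-preserving homeomorphism of A and let (ψ_i)_{i∈I} be a family of homeomorphisms ψ_i : Dom ψ_i → Im ψ_i between open subsets of A. Fix a nonempty open subset V ⊂ A. Let U_f be the union of all images of V under finite compositions of maps from {φ} ∪ {ψ_i}, and let U_g be the union of all images of V under finite compositions of maps from {φ, φ⁻¹} ∪ {ψ_i}. Then U_f ⊆ U_g and U_f is dense in U_g. -/

import Mathlib

open Set MeasureTheory Topology

/-- Apply a finite chain of locally defined maps (each given by a domain and a map)
to a set: `applyChain [p₁,…,pₙ] V = p₁ '' (… (pₙ '' (V ∩ domₙ)) … ∩ dom₁)`. -/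
def applyChain {α : Type*} (l : List (Set α × (α → α))) (V : Set α) : Set α :=
  l.foldr (fun p S => p.2 '' (S ∩ p.1)) V

/-- The full orbit of `V` under a polysystem: the union of `V` with all images of `V`
under finite compositions (in any order) of the locally defined maps of the family. -/
def fullOrbit {α : Type*} (fam : Set (Set α × (α → α))) (V : Set α) : Set α :=
  ⋃ l ∈ {l : List (Set α × (α → α)) | ∀ p ∈ l, p ∈ fam}, applyChain l V

lemma mem_fullOrbit {α : Type*} {fam : Set (Set α × (α → α))} {V : Set α} {x : α} :
    x ∈ fullOrbit fam V ↔ ∃ l : List (Set α × (α → α)),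
      (∀ p ∈ l, p ∈ fam) ∧ x ∈ applyChain l V := by
  simp [fullOrbit]

/-- **Symmetrization of polysystems.**  Let `A` be a metric space with a finite Borel
measure positive on nonempty open sets, `φ` a measure-preserving homeomorphism, and
`(ψ_i)` a family of homeomorphisms between open subsets.  For a nonempty open `V`,
the full orbit `U_f` of `V` under `{φ} ∪ {ψ_i}` is contained and dense in the full
orbit `U_g` of `V` under `{φ, φ⁻¹} ∪ {ψ_i}`. -/
theorem symmetrization_of_polysystems
    {A : Type*} [MetricSpace A] [MeasurableSpace A] [BorelSpace A]
    (μ : Measure A) [IsFiniteMeasure μ]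
    (hpos : ∀ U : Set A, IsOpen U → U.Nonempty → 0 < μ U)
    (φ : A ≃ₜ A) (hφ : MeasurePreserving (φ : A → A) μ μ)
    {I : Type*} (dom : I → Set A) (ψ : I → A → A)
    (hdom : ∀ i, IsOpen (dom i))
    (him : ∀ i, IsOpen (ψ i '' dom i))
    (hcont : ∀ i, ContinuousOn (ψ i) (dom i))
    (hinj : ∀ i, Set.InjOn (ψ i) (dom i))
    (hopen : ∀ i, ∀ U ⊆ dom i, IsOpen U → IsOpen (ψ i '' U))
    (V : Set A) (hV : IsOpen V) (hVne : V.Nonempty)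
    (famf famg : Set (Set A × (A → A)))
    (hfamf : famf = {(Set.univ, (φ : A → A))} ∪ Set.range (fun i => (dom i, ψ i)))
    (hfamg : famg = famf ∪ {(Set.univ, (φ.symm : A → A))}) :
    fullOrbit famf V ⊆ fullOrbit famg V ∧
      fullOrbit famg V ⊆ closure (fullOrbit famf V) := by
  set Uf := fullOrbit famf V with hUf
  -- closure of Uf under applying famf maps
  have stepA : ∀ p ∈ famf, ∀ x ∈ Uf, x ∈ p.1 → p.2 x ∈ Uf := by
    intro p hp x hx hx1
    rcases mem_fullOrbit.1 hx with ⟨l, hl, hxl⟩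
    refine mem_fullOrbit.2 ⟨p :: l, ?_, ?_⟩
    · intro q hq
      rcases List.mem_cons.1 hq with rfl | hq
      · exact hp
      · exact hl q hq
    · exact ⟨x, ⟨hxl, hx1⟩, rfl⟩
  -- Uf is open
  have hchain_open : ∀ l : List (Set A × (A → A)), (∀ p ∈ l, p ∈ famf) →
      IsOpen (applyChain l V) := by
    intro l
    induction l with
    | nil => intro _; exact hV
    | cons p l ih =>
      intro hl
      have hSo : IsOpen (applyChain l V) := ih fun q hq => hl q (List.mem_cons_of_mem _ hq)
      have hp : p ∈ famf := hl p (List.mem_cons_self)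
      rw [hfamf] at hp
      rcases hp with hp | ⟨i, rfl⟩
      · rcases hp with rfl
        show IsOpen ((φ : A → A) '' (applyChain l V ∩ univ))
        exact φ.isOpenMap _ (by simpa using hSo)
      · exact hopen i _ inter_subset_right (hSo.inter (hdom i))
  have hUfopen : IsOpen Uf := by
    refine isOpen_biUnion fun l hl => hchain_open l hl
  -- Uf closed under iterates of φ
  have hφUf : ∀ n : ℕ, ∀ x ∈ Uf, (φ : A → A)^[n] x ∈ Uf := by
    intro n
    induction n with
    | zero => intro x hx; simpa using hx
    | succ n ih =>
      intro x hx
      rw [Function.iterate_succ_apply']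
      exact stepA (Set.univ, (φ : A → A)) (by rw [hfamf]; exact Or.inl rfl)
        _ (ih x hx) (mem_univ _)
  -- key: φ⁻¹ of a point of Uf is in closure Uf
  have key : ∀ x ∈ Uf, φ.symm x ∈ closure Uf := by
    intro x hx
    rw [mem_closure_iff]
    intro O hO hxO
    set W := (φ : A → A) '' O ∩ Uf with hW
    have hWo : IsOpen W := (φ.isOpenMap _ hO).inter hUfopen
    have hWne : W.Nonempty := ⟨x, ⟨φ.symm x, hxO, φ.apply_symm_apply x⟩, hx⟩
    have hWpos : μ W ≠ 0 := (hpos W hWo hWne).ne'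
    obtain ⟨y, hyW, m, hm, hmy⟩ :=
      hφ.conservative.exists_mem_iterate_mem hWo.measurableSet.nullMeasurableSet hWpos
    refine ⟨(φ : A → A)^[m - 1] y, ?_, ?_⟩
    · -- it lies in O
      rcases hmy.1 with ⟨z, hzO, hz⟩
      have : (φ : A → A)^[m] y = (φ : A → A) ((φ : A → A)^[m - 1] y) := by
        conv_lhs => rw [show m = (m - 1) + 1 from (Nat.succ_pred_eq_of_pos (Nat.pos_of_ne_zero hm)).symm]
        rw [Function.iterate_succ_apply']
      have hz' : (φ : A → A) z = (φ : A → A) ((φ : A → A)^[m - 1] y) := by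
        rw [← this, hz]
      have := φ.injective hz'
      rwa [← this]
    · exact hφUf (m - 1) y hyW.2
  -- extend to closure
  have key' : ∀ x ∈ closure Uf, φ.symm x ∈ closure Uf := by
    intro x hx
    have := map_mem_closure φ.symm.continuous hx
      (fun y hy => subset_closure (key y hy))
    simpa using this
  -- famf maps send closure Uf ∩ dom into closure Uf
  have stepC : ∀ p ∈ famg, ∀ x ∈ closure Uf, x ∈ p.1 → p.2 x ∈ closure Uf := by
    intro p hp x hx hx1
    rw [hfamg] at hp
    rcases hp with hp | hp
    · -- p ∈ famf : continuity argument
      have hp1open : IsOpen p.1 := by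
        rw [hfamf] at hp
        rcases hp with hp | ⟨i, rfl⟩
        · rcases hp with rfl; exact isOpen_univ
        · exact hdom i
      have hcontp : ContinuousOn p.2 p.1 := by
        rw [hfamf] at hp
        rcases hp with hp | ⟨i, rfl⟩
        · rcases hp with rfl; exact φ.continuous.continuousOn
        · exact hcont i
      have hxcl : x ∈ closure (Uf ∩ p.1) := by
        have : p.1 ∩ closure Uf ⊆ closure (p.1 ∩ Uf) := hp1open.inter_closure
        have h2 := this ⟨hx1, hx⟩
        rwa [inter_comm] at h2
      have hcwa : ContinuousWithinAt p.2 (Uf ∩ p.1) x := by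
        exact (hcontp x hx1).mono inter_subset_right
      have := hcwa.mem_closure_image hxcl
      refine closure_mono ?_ this
      rintro _ ⟨y, hy, rfl⟩
      exact stepA p hp y hy.1 hy.2
    · rcases hp with rfl
      exact key' x hx
  -- density: every famg chain lands in closure Uf
  have hdense : ∀ l : List (Set A × (A → A)), (∀ p ∈ l, p ∈ famg) →
      applyChain l V ⊆ closure Uf := by
    intro l
    induction l with
    | nil => intro _; exact subset_closure.trans (closure_mono
        (fun x hx => mem_fullOrbit.2 ⟨[], by simp, hx⟩))
    | cons p l ih =>
      intro hl
      rintro _ ⟨y, ⟨hy, hy1⟩, rfl⟩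
      exact stepC p (hl p (List.mem_cons_self)) y
        (ih (fun q hq => hl q (List.mem_cons_of_mem _ hq)) hy) hy1
  constructor
  · intro x hx
    rcases mem_fullOrbit.1 hx with ⟨l, hl, hxl⟩
    exact mem_fullOrbit.2 ⟨l, fun p hp => by rw [hfamg]; exact Or.inl (hl p hp), hxl⟩
  · intro x hx
    rcases mem_fullOrbit.1 hx with ⟨l, hl, hxl⟩
    exact hdense l hl hxl
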